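/- (Pairing Strategy) Let G=(V,E_L,E_R) be an achievement positional game. If the hypergraph (V,E_L) admits a complete pairing, then Right has a non-losing strategy on G as first player and also as second player. -/

import Mathlib

namespace APG

/-- The two players: Left and Right. -/
inductive Player : Type
  | L : Player
  | R : Player
deriving DecidableEq, Repr

/-- The opponent of a player. -/
def Player.other : Player → Player
  | .L => .R
  | .R => .L

/-- An achievement positional game: a finite vertex set together with the set of
blue edges (Left's winning sets) and the set of red edges (Right's winning sets). -/
structure Game : Type where
  V : Finset ℕ
  EL : Finset (Finset ℕ)
  ER : Finset (Finset ℕ)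

/-- The edges are nonempty subsets of the vertex set. -/
def WellFormed (G : Game) : Prop :=
  (∀ e ∈ G.EL, e ⊆ G.V ∧ e.Nonempty) ∧ (∀ e ∈ G.ER, e ⊆ G.V ∧ e.Nonempty)

/-- The winning sets of a given player. -/
def Game.edges (G : Game) : Player → Finset (Finset ℕ)
  | .L => G.EL
  | .R => G.ER

/-- The player who makes the `i`-th move (0-indexed) when `s` moves first. -/
def mover (s : Player) (i : ℕ) : Player := if i % 2 = 0 then s else s.other

/-- The set of vertices picked by player `p` along the history `h`
(the chronological list of the moves played so far), when `s` moved first. -/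
def picked (s p : Player) (h : List ℕ) : Finset ℕ :=
  ((Finset.range h.length).filter fun i => mover s i = p).image fun i => h.getD i 0

/-- The set `S` of picked vertices fills some edge of `E`. -/
def fills (E : Finset (Finset ℕ)) (S : Finset ℕ) : Prop := ∃ e ∈ E, e ⊆ S

/-- The game is over: some player has picked all the vertices of one of their edges. -/
def ended (G : Game) (s : Player) (h : List ℕ) : Prop :=
  fills G.EL (picked s .L h) ∨ fills G.ER (picked s .R h)

/-- `h` is a legal history: no vertex is picked twice, every picked vertex belongs to
the board, and no move is made after the game has ended. -/
def ValidHist (G : Game) (s : Player) (h : List ℕ) : Prop :=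
  h.Nodup ∧ (∀ x ∈ h, x ∈ G.V) ∧ ∀ k, k < h.length → ¬ ended G s (h.take k)

/-- A strategy: a map assigning to each position (history) a vertex to pick. -/
abbrev Strategy := List ℕ → ℕ

/-- Along `h`, every move of player `p` agrees with the strategy `σ`. -/
def Follows (s p : Player) (σ : Strategy) (h : List ℕ) : Prop :=
  ∀ k, k < h.length → mover s k = p → h.getD k 0 = σ (h.take k)

/-- A finished play: either the game has ended or all vertices have been picked. -/
def Complete (G : Game) (s : Player) (h : List ℕ) : Prop :=
  ended G s h ∨ h.length = G.V.card

/-- The strategy `σ` of player `p` always suggests a legal move (an unpicked vertex)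
whenever the game is not over and it is `p`'s turn. -/
def Legal (G : Game) (s p : Player) (σ : Strategy) : Prop :=
  ∀ h, ValidHist G s h → Follows s p σ h → ¬ ended G s h → h.length < G.V.card →
    mover s h.length = p → σ h ∈ G.V ∧ σ h ∉ h

/-- Player `p` has a winning strategy on `G` when `s` moves first: following it,
every finished play ends with `p` having filled one of their edges (and, the game
having ended right there, the opponent has not filled an edge first). -/
def WinsAs (G : Game) (s p : Player) : Prop :=
  ∃ σ : Strategy, Legal G s p σ ∧
    ∀ h, ValidHist G s h → Follows s p σ h → Complete G s h →
      fills (G.edges p) (picked s p h)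

/-- Player `p` has a non-losing strategy on `G` when `s` moves first: following it,
the opponent never fills one of their edges. -/
def NonLosingAs (G : Game) (s p : Player) : Prop :=
  ∃ σ : Strategy, Legal G s p σ ∧
    ∀ h, ValidHist G s h → Follows s p σ h → Complete G s h →
      ¬ fills (G.edges p.other) (picked s p.other h)

/-- The possible results of the game, for a fixed starting player. -/
inductive Result : Type
  | Lwin : Result
  | draw : Result
  | Rwin : Result
deriving DecidableEq, Repr

/-- The result of `G` with optimal play, when `s` moves first, is `r`:
a win for a player means that player has a winning strategy, a draw means
both players have non-losing strategies. -/
def resultIs (G : Game) (s : Player) : Result → Prop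
  | .Lwin => WinsAs G s .L
  | .Rwin => WinsAs G s .R
  | .draw => NonLosingAs G s .L ∧ NonLosingAs G s .R

/-- An outcome: the pair of results with optimal play
(when Left starts, when Right starts). -/
abbrev Outcome := Result × Result

/-- `G` has outcome `o`. -/
def hasOutcome (G : Game) (o : Outcome) : Prop :=
  resultIs G .L o.1 ∧ resultIs G .R o.2

/-- Numerical value of a result, from Left's point of view:
Right wins < draw < Left wins. -/
def Result.val : Result → ℕ
  | .Rwin => 0
  | .draw => 1
  | .Lwin => 2

/-- The partial order `≤_L` on outcomes, comparing both components simultaneously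
from Left's point of view. -/
def outLE (o o' : Outcome) : Prop := o.1.val ≤ o'.1.val ∧ o.2.val ≤ o'.2.val

def oL : Outcome := (.Lwin, .Lwin)
def oLminus : Outcome := (.Lwin, .draw)
def oN : Outcome := (.Lwin, .Rwin)
def oD : Outcome := (.draw, .draw)
def oRminus : Outcome := (.draw, .Rwin)
def oR : Outcome := (.Rwin, .Rwin)

/-- The updated game `G_u` after Left has picked `u`. -/
def subL (G : Game) (u : ℕ) : Game where
  V := G.V.erase u
  EL := G.EL.image fun e => e.erase u
  ER := G.ER.filter fun e => u ∉ e

/-- The updated game `G^u` after Right has picked `u`. -/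
def subR (G : Game) (u : ℕ) : Game where
  V := G.V.erase u
  EL := G.EL.filter fun e => u ∉ e
  ER := G.ER.image fun e => e.erase u

/-- The updated game `G_u^v` after Left has picked `u` and Right has picked `v`. -/
def updLR (G : Game) (u v : ℕ) : Game where
  V := (G.V.erase u).erase v
  EL := (G.EL.filter fun e => v ∉ e).image fun e => e.erase u
  ER := (G.ER.filter fun e => u ∉ e).image fun e => e.erase v

/-- The disjoint union of two games. -/
def gunion (G G' : Game) : Game where
  V := G.V ∪ G'.V
  EL := G.EL ∪ G'.EL
  ER := G.ER ∪ G'.ER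

section PairingAux

lemma mem_picked {s p : Player} {h : List ℕ} {x : ℕ} :
    x ∈ picked s p h ↔ ∃ i, i < h.length ∧ mover s i = p ∧ h.getD i 0 = x := by
  simp [picked]; tauto

lemma picked_nil (s p : Player) : picked s p [] = ∅ := by simp [picked]

lemma picked_subset {s p : Player} {h : List ℕ} : picked s p h ⊆ h.toFinset := by
  intro x hx
  obtain ⟨i, hi, -, hg⟩ := mem_picked.mp hx
  rw [List.mem_toFinset, ← hg, List.getD_eq_getElem h 0 hi]
  exact List.getElem_mem hi

lemma mem_toFinset_picked {s : Player} {h : List ℕ} {x : ℕ} (hx : x ∈ h.toFinset) :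
    x ∈ picked s .L h ∨ x ∈ picked s .R h := by
  obtain ⟨i, hi, hg⟩ := List.mem_iff_getElem.mp (List.mem_toFinset.mp hx)
  have hgd : h.getD i 0 = x := by rw [List.getD_eq_getElem h 0 hi, hg]
  cases hm : mover s i with
  | L => exact Or.inl (mem_picked.mpr ⟨i, hi, hm, hgd⟩)
  | R => exact Or.inr (mem_picked.mpr ⟨i, hi, hm, hgd⟩)

lemma picked_disjoint {s : Player} {h : List ℕ} (hn : h.Nodup) {x : ℕ}
    (h1 : x ∈ picked s .L h) (h2 : x ∈ picked s .R h) : False := by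
  obtain ⟨i, hi, hmi, hgi⟩ := mem_picked.mp h1
  obtain ⟨j, hj, hmj, hgj⟩ := mem_picked.mp h2
  rw [List.getD_eq_getElem h 0 hi] at hgi
  rw [List.getD_eq_getElem h 0 hj] at hgj
  have : i = j := (List.Nodup.getElem_inj_iff hn).mp (by rw [hgi, hgj])
  rw [this, hmj] at hmi
  cases hmi

lemma mover_succ (s : Player) (n : ℕ) : mover s (n + 1) = (mover s n).other := by
  unfold mover
  rcases Nat.mod_two_eq_zero_or_one n with h | h <;>
    [skip; skip] <;> simp [h, Nat.add_mod] <;> cases s <;> rfl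

lemma mover_cases (s : Player) (n : ℕ) : mover s n = .L ∨ mover s n = .R := by
  cases mover s n <;> simp

lemma picked_concat (s p : Player) (l : List ℕ) (x : ℕ) :
    picked s p (l ++ [x]) =
      if mover s l.length = p then insert x (picked s p l) else picked s p l := by
  ext y
  constructor
  · intro hy
    obtain ⟨i, hi, hm, hg⟩ := mem_picked.mp hy
    simp only [List.length_append, List.length_singleton] at hi
    rcases Nat.lt_succ_iff_lt_or_eq.mp hi with hlt | heq
    · rw [List.getD_append l [x] 0 i hlt] at hg
      have : y ∈ picked s p l := mem_picked.mpr ⟨i, hlt, hm, hg⟩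
      split_ifs <;> simp [this]
    · subst heq
      rw [if_pos hm]
      have : (l ++ [x]).getD l.length 0 = x := by simp [List.getD_eq_getElem?_getD]
      rw [this] at hg
      simp [← hg]
  · intro hy
    split_ifs at hy with hm
    · rcases Finset.mem_insert.mp hy with hyx | hyl
      · subst hyx
        exact mem_picked.mpr ⟨l.length, by simp, hm, by simp [List.getD_eq_getElem?_getD]⟩
      · obtain ⟨i, hi, hmi, hg⟩ := mem_picked.mp hyl
        exact mem_picked.mpr ⟨i, by simp; omega, hmi, by rwa [List.getD_append l [x] 0 i hi]⟩
    · obtain ⟨i, hi, hmi, hg⟩ := mem_picked.mp hy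
      exact mem_picked.mpr ⟨i, by simp; omega, hmi, by rwa [List.getD_append l [x] 0 i hi]⟩

lemma toFinset_concat (l : List ℕ) (x : ℕ) :
    (l ++ [x]).toFinset = insert x l.toFinset := by
  ext y; simp [or_comm]

open Classical in
/-- The pairing strategy for Right. -/
noncomputable def pairσ (G : Game) (P : Finset (Finset ℕ)) (s : Player) : Strategy := fun h =>
  if hx : ∃ p, p ∈ P ∧ (p ∩ picked s .L h).Nonempty ∧ p ∩ picked s .R h = ∅ ∧
      (p \ h.toFinset).Nonempty
  then (hx.choose \ h.toFinset).min' hx.choose_spec.2.2.2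
  else if hv : (G.V \ h.toFinset).Nonempty then (G.V \ h.toFinset).min' hv else 0

/-- The invariant maintained by the pairing strategy. -/
def Inv (s : Player) (P : Finset (Finset ℕ)) (h : List ℕ) : Prop :=
  ∀ p ∈ P, (p ∩ picked s .L h).Nonempty →
    (p ∩ picked s .R h).Nonempty ∨
      (mover s h.length = .R ∧ ∃ z, h.getLast? = some z ∧ z ∈ p ∧ (p \ h.toFinset).Nonempty)

lemma valid_prefix {G : Game} {s : Player} {l : List ℕ} {x : ℕ}
    (hv : ValidHist G s (l ++ [x])) : ValidHist G s l := by
  obtain ⟨hnd, hmem, hend⟩ := hv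
  refine ⟨(List.nodup_append.mp hnd).1, fun y hy => hmem y (by simp [hy]), fun k hk => ?_⟩
  have := hend k (by simp; omega)
  rwa [List.take_append_of_le_length (le_of_lt hk)] at this

lemma follows_prefix {s p : Player} {σ : Strategy} {l : List ℕ} {x : ℕ}
    (hf : Follows s p σ (l ++ [x])) : Follows s p σ l := by
  intro k hk hm
  have := hf k (by simp; omega) hm
  rwa [List.getD_append l [x] 0 k hk, List.take_append_of_le_length (le_of_lt hk)] at this

lemma inv_main (G : Game) (P : Finset (Finset ℕ))
    (hpairs : ∀ p ∈ P, p.card = 2 ∧ p ⊆ G.V)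
    (hdisj : ∀ p ∈ P, ∀ q ∈ P, p ≠ q → Disjoint p q) (s : Player) :
    ∀ h, ValidHist G s h → Follows s .R (pairσ G P s) h → Inv s P h := by
  intro h
  induction h using List.reverseRecOn with
  | nil =>
    intro _ _ p hp hne
    simp [picked_nil] at hne
  | append_singleton l x ih =>
    intro hv hf
    have hvl : ValidHist G s l := valid_prefix hv
    have hfl : Follows s .R (pairσ G P s) l := follows_prefix hf
    have hInv : Inv s P l := ih hvl hfl
    have hxl : x ∉ l := by
      have := hv.1
      rw [List.nodup_append] at this
      intro hc
      exact this.2.2 x hc x (by simp) rfl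
    rcases mover_cases s l.length with hm | hm
    · -- Left just moved
      intro p hp hne
      have hL' : picked s .L (l ++ [x]) = insert x (picked s .L l) := by
        rw [picked_concat, if_pos hm]
      have hR' : picked s .R (l ++ [x]) = picked s .R l := by
        rw [picked_concat, if_neg (by rw [hm]; intro hc; cases hc)]
      rw [hL'] at hne
      by_cases hRp : (p ∩ picked s .R l).Nonempty
      · left; rwa [hR']
      · have hLp : ¬(p ∩ picked s .L l).Nonempty := by
          intro hc
          rcases hInv p hp hc with h1 | h2
          · exact hRp h1
          · rw [hm] at h2; cases h2.1
        have hxp : x ∈ p := by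
          obtain ⟨y, hy⟩ := hne
          rw [Finset.mem_inter, Finset.mem_insert] at hy
          rcases hy.2 with rfl | hyL
          · exact hy.1
          · exact absurd ⟨y, Finset.mem_inter.mpr ⟨hy.1, hyL⟩⟩ hLp
        right
        refine ⟨?_, x, by simp, hxp, ?_⟩
        · rw [List.length_append, List.length_singleton, mover_succ, hm]; rfl
        · apply Finset.sdiff_nonempty.mpr
          intro hsub
          have hce : (p.erase x).Nonempty := by
            rw [← Finset.card_pos, Finset.card_erase_of_mem hxp, (hpairs p hp).1]
            norm_num
          obtain ⟨c, hc⟩ := hce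
          have hcp := Finset.mem_of_mem_erase hc
          have hcx := Finset.ne_of_mem_erase hc
          have hcl : c ∈ l.toFinset := by
            have := hsub hcp
            rw [toFinset_concat, Finset.mem_insert] at this
            tauto
          rcases mem_toFinset_picked (s := s) hcl with hL | hR
          · exact hLp ⟨c, Finset.mem_inter.mpr ⟨hcp, hL⟩⟩
          · exact hRp ⟨c, Finset.mem_inter.mpr ⟨hcp, hR⟩⟩
    · -- Right just moved
      intro p hp hne
      have hL' : picked s .L (l ++ [x]) = picked s .L l := by
        rw [picked_concat, if_neg (by rw [hm]; intro hc; cases hc)]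
      have hR' : picked s .R (l ++ [x]) = insert x (picked s .R l) := by
        rw [picked_concat, if_pos hm]
      rw [hL'] at hne
      left
      rw [hR']
      by_cases hRp : (p ∩ picked s .R l).Nonempty
      · obtain ⟨y, hy⟩ := hRp
        rw [Finset.mem_inter] at hy
        exact ⟨y, Finset.mem_inter.mpr ⟨hy.1, Finset.mem_insert_of_mem hy.2⟩⟩
      · obtain ⟨-, z, hz, hzp, hpd⟩ := (hInv p hp hne).resolve_left hRp
        have hRe : p ∩ picked s .R l = ∅ := Finset.not_nonempty_iff_eq_empty.mp hRp
        have hx_ex : ∃ q, q ∈ P ∧ (q ∩ picked s .L l).Nonempty ∧ q ∩ picked s .R l = ∅ ∧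
            (q \ l.toFinset).Nonempty := ⟨p, hp, hne, hRe, hpd⟩
        have hxσ : x = pairσ G P s l := by
          have := hf l.length (by simp) (by simpa using hm)
          rw [List.take_append_of_le_length (le_refl _), List.take_length] at this
          rw [← this]
          simp [List.getD_eq_getElem?_getD]
        obtain ⟨hcP, hcL, hcR, hcD⟩ := hx_ex.choose_spec
        have hcInv := (hInv _ hcP hcL).resolve_left (by rw [hcR]; simp)
        obtain ⟨-, z', hz', hz'c, -⟩ := hcInv
        have hzz : z' = z := by rw [hz] at hz'; exact (Option.some_inj.mp hz').symm
        have hcp : hx_ex.choose = p := by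
          by_contra hne2
          exact Finset.disjoint_left.mp (hdisj _ hcP p hp hne2) hz'c (hzz ▸ hzp)
        have hxmem : x ∈ hx_ex.choose \ l.toFinset := by
          rw [hxσ, pairσ, dif_pos hx_ex]
          exact Finset.min'_mem _ _
        refine ⟨x, Finset.mem_inter.mpr ⟨?_, Finset.mem_insert_self _ _⟩⟩
        rw [← hcp]
        exact (Finset.mem_sdiff.mp hxmem).1

lemma pairσ_legal (G : Game) (P : Finset (Finset ℕ))
    (hpairs : ∀ p ∈ P, p.card = 2 ∧ p ⊆ G.V) (s : Player) :
    Legal G s .R (pairσ G P s) := by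
  intro h hv _ _ hlen _
  have hcard : h.toFinset.card = h.length := List.toFinset_card_of_nodup hv.1
  rw [pairσ]
  split_ifs with hx hv2
  · obtain ⟨hcP, -, -, -⟩ := hx.choose_spec
    have hm := Finset.min'_mem (hx.choose \ h.toFinset) hx.choose_spec.2.2.2
    rw [Finset.mem_sdiff] at hm
    exact ⟨(hpairs _ hcP).2 hm.1, fun hc => hm.2 (List.mem_toFinset.mpr hc)⟩
  · have hm := Finset.min'_mem (G.V \ h.toFinset) hv2
    rw [Finset.mem_sdiff] at hm
    exact ⟨hm.1, fun hc => hm.2 (List.mem_toFinset.mpr hc)⟩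
  · exfalso
    apply hv2
    apply Finset.sdiff_nonempty.mpr
    intro hsub
    have := Finset.card_le_card hsub
    omega

end PairingAux

/-- Pairing strategy: if the blue hypergraph admits a complete pairing, then Right has
a non-losing strategy on `G`, both as first player and as second player. -/
theorem pairing_strategy (G : Game) (hG : WellFormed G) (P : Finset (Finset ℕ))
    (hpairs : ∀ p ∈ P, p.card = 2 ∧ p ⊆ G.V)
    (hdisj : ∀ p ∈ P, ∀ q ∈ P, p ≠ q → Disjoint p q)
    (hcover : ∀ e ∈ G.EL, ∃ p ∈ P, p ⊆ e) :
    NonLosingAs G .R .R ∧ NonLosingAs G .L .R := by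

  have key : ∀ s : Player, NonLosingAs G s .R := by
    intro s
    refine ⟨pairσ G P s, pairσ_legal G P hpairs s, ?_⟩
    intro h hvh hfh _ hfills
    simp only [fills, Game.edges, Player.other] at hfills
    obtain ⟨e, he, hsub⟩ := hfills
    obtain ⟨p, hpP, hpe⟩ := hcover e he
    have hpL : p ⊆ picked s .L h := hpe.trans hsub
    have hpne : (p ∩ picked s .L h).Nonempty := by
      rw [Finset.inter_eq_left.mpr hpL]
      exact Finset.card_pos.mp (by rw [(hpairs p hpP).1]; norm_num)
    rcases inv_main G P hpairs hdisj s h hvh hfh p hpP hpne with ⟨y, hy⟩ | ⟨-, z, -, -, c, hc⟩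
    · rw [Finset.mem_inter] at hy
      exact picked_disjoint hvh.1 (hpL hy.1) hy.2
    · rw [Finset.mem_sdiff] at hc
      exact hc.2 (picked_subset (hpL hc.1))
  exact ⟨key .R, key .L⟩

end APG
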